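/- The Shannon entropy of the Poisson distribution, H_S(λ) = -∑_{k=0}^∞ (λ^k e^{-λ}/k!) · log(λ^k e^{-λ}/k!), is a strictly concave function of λ on (0, +∞). -/

import Mathlib

open Set Filter

namespace ShannonPoissonAux

/-- cube growth bound -/
lemma cube_le (n : ℕ) : ((n : ℝ) + 1) ^ 3 ≤ 8 * 8 ^ n := by
  have h : (n + 1) ^ 3 ≤ 8 ^ (n + 1) := by
    calc (n + 1) ^ 3 ≤ (2 ^ (n + 1)) ^ 3 :=
          Nat.pow_le_pow_left (by have := @Nat.lt_two_pow_self (n + 1); omega) 3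
      _ = 8 ^ (n + 1) := by
          rw [← pow_mul, show (n+1)*3 = 3*(n+1) by ring, pow_mul]; norm_num
  have := (Nat.cast_le (α := ℝ)).2 h
  push_cast at this
  calc ((n : ℝ) + 1) ^ 3 ≤ (8 : ℝ) ^ (n + 1) := by exact_mod_cast this
    _ = 8 * 8 ^ n := by ring

lemma summable_cube (b : ℝ) (hb : 0 ≤ b) :
    Summable (fun n : ℕ => ((n : ℝ) + 1) ^ 3 * b ^ n / (Nat.factorial n : ℝ)) := by
  refine Summable.of_nonneg_of_le (fun n => by positivity) (fun n => ?_)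
    (((Real.summable_pow_div_factorial (8 * b)).mul_left 8))
  have h1 : ((n : ℝ) + 1) ^ 3 * b ^ n ≤ 8 * 8 ^ n * b ^ n :=
    mul_le_mul_of_nonneg_right (cube_le n) (by positivity)
  have h2 : (8 : ℝ) * 8 ^ n * b ^ n = 8 * (8 * b) ^ n := by rw [mul_pow]; ring
  calc ((n : ℝ) + 1) ^ 3 * b ^ n / (Nat.factorial n : ℝ)
      ≤ (8 * (8 * b) ^ n) / (Nat.factorial n : ℝ) := by
        apply div_le_div_of_nonneg_right ?_ ?_ |>.trans_eq rfl
        · rw [← h2]; exact h1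
        · exact_mod_cast n.factorial_pos.le
    _ = 8 * ((8 * b) ^ n / (Nat.factorial n : ℝ)) := by ring

lemma summable_of_cube_bound {f : ℕ → ℝ} {b : ℝ} (hb : 0 ≤ b)
    (h : ∀ n, |f n| ≤ ((n : ℝ) + 1) ^ 3 * b ^ n / (Nat.factorial n : ℝ)) : Summable f :=
  Summable.of_abs (Summable.of_nonneg_of_le (fun n => abs_nonneg _) h (summable_cube b hb))


/-- growth condition on coefficients -/
def Gc (c : ℕ → ℝ) : Prop := ∀ k : ℕ, |c k| ≤ ((k : ℝ) + 1) ^ 2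

/-- power-type series -/
noncomputable def ps (c : ℕ → ℝ) (x : ℝ) : ℝ :=
  ∑' k : ℕ, c k * x ^ k / (Nat.factorial k : ℝ)

lemma summable_ps {c : ℕ → ℝ} (hc : Gc c) (x : ℝ) :
    Summable (fun k : ℕ => c k * x ^ k / (Nat.factorial k : ℝ)) := by
  refine summable_of_cube_bound (b := |x|) (abs_nonneg x) (fun n => ?_)
  have hfac : (0 : ℝ) < (Nat.factorial n : ℝ) := by exact_mod_cast n.factorial_pos
  rw [abs_div, abs_mul, abs_pow, abs_of_pos hfac]
  have hc3 : |c n| ≤ ((n : ℝ) + 1) ^ 3 :=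
    (hc n).trans (pow_le_pow_right₀ (by linarith [Nat.cast_nonneg (α := ℝ) n]) (by norm_num))
  gcongr

lemma hasDerivAt_ps {c : ℕ → ℝ} (hc : Gc c) (x : ℝ) :
    HasDerivAt (ps c) (ps (fun k => c (k + 1)) x) x := by
  set R : ℝ := |x| + 1 with hRdef
  have hR0 : (0 : ℝ) ≤ R := by positivity
  have hR1 : (1 : ℝ) ≤ R := by rw [hRdef]; linarith [abs_nonneg x]
  have hxR : |x| < R := by simp [hRdef]
  set t : Set ℝ := Ioo (-R) R with htdef
  have hxt : x ∈ t := by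
    rcases abs_lt.1 hxR with ⟨h1, h2⟩; exact ⟨h1, h2⟩
  set g : ℕ → ℝ → ℝ := fun n y => c n * y ^ n / (Nat.factorial n : ℝ) with hgdef
  set g' : ℕ → ℝ → ℝ := fun n y => c n * ((n : ℝ) * y ^ (n - 1)) / (Nat.factorial n : ℝ)
    with hg'def
  set u : ℕ → ℝ := fun n => ((n : ℝ) + 1) ^ 3 * R ^ n / (Nat.factorial n : ℝ) with hudef
  have hu : Summable u := summable_cube R hR0
  have hg : ∀ n y, y ∈ t → HasDerivAt (g n) (g' n y) y := by
    intro n y _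
    simpa [hgdef, hg'def, mul_comm, mul_assoc, mul_left_comm] using
      ((hasDerivAt_pow n y).const_mul (c n)).div_const (Nat.factorial n : ℝ)
  have hg' : ∀ n y, y ∈ t → ‖g' n y‖ ≤ u n := by
    intro n y hy
    have hyR : |y| ≤ R := by
      rcases hy with ⟨h1, h2⟩; exact (abs_lt.2 ⟨h1, h2⟩).le
    have hfac : (0 : ℝ) < (Nat.factorial n : ℝ) := by exact_mod_cast n.factorial_pos
    have h1 : |y| ^ (n - 1) ≤ R ^ (n - 1) := pow_le_pow_left₀ (abs_nonneg y) hyR _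
    have h2 : R ^ (n - 1) ≤ R ^ n := pow_le_pow_right₀ hR1 (Nat.sub_le n 1)
    have hn1 : (n : ℝ) ≤ (n : ℝ) + 1 := by linarith
    rw [Real.norm_eq_abs, abs_div, abs_of_pos hfac, abs_mul, abs_mul, abs_pow]
    have hueq : u n = ((n : ℝ) + 1) ^ 3 * R ^ n / (Nat.factorial n : ℝ) := rfl
    rw [hueq]
    gcongr ?_ / _
    have hcn : |c n| ≤ ((n : ℝ) + 1) ^ 2 := hc n
    have hnabs : |(n : ℝ)| = (n : ℝ) := abs_of_nonneg (Nat.cast_nonneg n)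
    rw [hnabs]
    calc |c n| * ((n : ℝ) * |y| ^ (n - 1))
        ≤ ((n : ℝ) + 1) ^ 2 * (((n : ℝ) + 1) * R ^ n) := by
          apply mul_le_mul hcn ?_ (by positivity) (by positivity)
          exact mul_le_mul hn1 (h1.trans h2) (by positivity) (by positivity)
      _ = ((n : ℝ) + 1) ^ 3 * R ^ n := by ring
  have hsum0 : Summable (fun n => g n x) := summable_ps hc x
  have key := hasDerivAt_tsum_of_isPreconnected hu isOpen_Ioo
    (convex_Ioo (-R) R).isPreconnected hg hg' hxt hsum0 hxt
  have hsum' : Summable (fun n => g' n x) :=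
    Summable.of_norm_bounded hu (fun n => hg' n x hxt)
  have hshift : (∑' n, g' n x) = ps (fun k => c (k + 1)) x := by
    rw [tsum_eq_zero_add' ((summable_nat_add_iff 1).2 hsum')]
    have h0 : g' 0 x = 0 := by simp [hg'def]
    rw [h0, zero_add, ps]
    refine tsum_congr (fun k => ?_)
    have hfac : ((Nat.factorial k : ℝ)) ≠ 0 := by
      exact_mod_cast k.factorial_pos.ne'
    have : g' (k + 1) x = c (k + 1) * (((k : ℝ) + 1) * x ^ k) / ((((k : ℝ) + 1)) * (Nat.factorial k : ℝ)) := by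
      simp [hg'def, Nat.factorial_succ]
      try push_cast
      try ring_nf
    rw [this]
    field_simp
  rw [← hshift]
  exact key


/-- coefficients: log k! -/
noncomputable def cT : ℕ → ℝ := fun k => Real.log (Nat.factorial k)
/-- coefficients: log (k+1)! -/
noncomputable def cT' : ℕ → ℝ := fun k => cT (k + 1)
/-- coefficients: log (k+1) -/
noncomputable def cS : ℕ → ℝ := fun k => Real.log ((k : ℝ) + 1)
/-- coefficients: log (k+2) -/
noncomputable def cS' : ℕ → ℝ := fun k => cS (k + 1)

lemma logfact_le (n : ℕ) : Real.log (Nat.factorial n) ≤ (n : ℝ) * (n : ℝ) := by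
  have h1 : (Nat.factorial n : ℝ) ≤ ((n : ℝ)) ^ n := by
    exact_mod_cast Nat.cast_le.2 n.factorial_le_pow |>.trans_eq (by push_cast; ring)
  have hpos : (0 : ℝ) < (Nat.factorial n : ℝ) := by exact_mod_cast n.factorial_pos
  calc Real.log (Nat.factorial n) ≤ Real.log (((n : ℝ)) ^ n) :=
        Real.log_le_log hpos h1
    _ = (n : ℝ) * Real.log n := by rw [Real.log_pow]
    _ ≤ (n : ℝ) * (n : ℝ) :=
        mul_le_mul_of_nonneg_left (Real.log_le_self (Nat.cast_nonneg n)) (Nat.cast_nonneg n)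

lemma logfact_nonneg (n : ℕ) : 0 ≤ Real.log (Nat.factorial n) :=
  Real.log_nonneg (by exact_mod_cast n.factorial_pos)

lemma gc_cT : Gc cT := by
  intro k
  rw [cT, abs_of_nonneg (logfact_nonneg k)]
  have := logfact_le k
  have hk : (0:ℝ) ≤ k := Nat.cast_nonneg k
  nlinarith

lemma gc_cT' : Gc cT' := by
  intro k
  rw [cT', cT, abs_of_nonneg (logfact_nonneg (k+1))]
  have h1 : (Nat.factorial (k+1) : ℝ) ≤ ((k : ℝ) + 1) ^ (k+1) := by
    have := Nat.cast_le (α := ℝ) |>.2 (k+1).factorial_le_pow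
    push_cast at this
    exact this
  have hpos : (0 : ℝ) < (Nat.factorial (k+1) : ℝ) := by exact_mod_cast (k+1).factorial_pos
  have hk : (0:ℝ) ≤ k := Nat.cast_nonneg k
  calc Real.log (Nat.factorial (k+1)) ≤ Real.log (((k : ℝ) + 1) ^ (k+1)) :=
        Real.log_le_log hpos h1
    _ = ((k : ℝ) + 1) * Real.log ((k : ℝ) + 1) := by rw [Real.log_pow]; push_cast; ring
    _ ≤ ((k : ℝ) + 1) * (k : ℝ) := by
        have := Real.log_le_sub_one_of_pos (show (0:ℝ) < (k:ℝ)+1 by linarith)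
        nlinarith
    _ ≤ ((k : ℝ) + 1) ^ 2 := by nlinarith

lemma gc_cS : Gc cS := by
  intro k
  have hk : (0:ℝ) ≤ k := Nat.cast_nonneg k
  rw [cS, abs_of_nonneg (Real.log_nonneg (by linarith))]
  have := Real.log_le_sub_one_of_pos (show (0:ℝ) < (k:ℝ)+1 by linarith)
  nlinarith

lemma gc_cS' : Gc cS' := by
  intro k
  have hk : (0:ℝ) ≤ k := Nat.cast_nonneg k
  rw [cS', cS, abs_of_nonneg (Real.log_nonneg (by push_cast; linarith))]
  have := Real.log_le_sub_one_of_pos (show (0:ℝ) < ((k:ℕ)+1:ℕ)+1 by positivity)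
  push_cast at this ⊢
  nlinarith

lemma gc_one : Gc (fun _ => (1:ℝ)) := by
  intro k
  have hk : (0:ℝ) ≤ k := Nat.cast_nonneg k
  rw [abs_one]
  nlinarith

lemma gc_nat : Gc (fun k => (k:ℝ)) := by
  intro k
  have hk : (0:ℝ) ≤ k := Nat.cast_nonneg k
  rw [abs_of_nonneg hk]
  nlinarith

lemma gc_inv : Gc (fun k => 1 / ((k:ℝ) + 1)) := by
  intro k
  have hk : (0:ℝ) ≤ k := Nat.cast_nonneg k
  have h1 : (0:ℝ) < (k:ℝ) + 1 := by linarith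
  rw [abs_of_nonneg (by positivity)]
  have : 1 / ((k:ℝ) + 1) ≤ 1 := by
    rw [div_le_one h1]; linarith
  nlinarith

/-- exp series -/
lemma ps_one (x : ℝ) : ps (fun _ => (1:ℝ)) x = Real.exp x := by
  rw [ps, Real.exp_eq_exp_ℝ, NormedSpace.exp_eq_tsum_div]
  simp

lemma ps_nat (x : ℝ) : ps (fun k => (k:ℝ)) x = x * Real.exp x := by
  have hs : Summable (fun k : ℕ => (k:ℝ) * x ^ k / (Nat.factorial k : ℝ)) :=
    summable_ps gc_nat x
  rw [ps, tsum_eq_zero_add' ((summable_nat_add_iff 1).2 hs)]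
  simp only [Nat.cast_zero, zero_mul, zero_div, zero_add, pow_zero]
  have : ∀ k : ℕ, ((k:ℕ)+1 : ℝ) * x ^ (k+1) / (Nat.factorial (k+1) : ℝ)
      = x * ((1:ℝ) * x ^ k / (Nat.factorial k : ℝ)) := by
    intro k
    have hfac : ((Nat.factorial k : ℝ)) ≠ 0 := by exact_mod_cast k.factorial_pos.ne'
    rw [Nat.factorial_succ]
    push_cast
    field_simp
    ring
  calc (∑' k : ℕ, (((k:ℕ)+1 : ℕ) : ℝ) * x ^ (k+1) / (Nat.factorial (k+1) : ℝ))
      = ∑' k : ℕ, x * ((1:ℝ) * x ^ k / (Nat.factorial k : ℝ)) := by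
        refine tsum_congr (fun k => ?_)
        push_cast
        exact this k
    _ = x * Real.exp x := by rw [tsum_mul_left, ← ps, ps_one]

/-- tail exp series -/
lemma ps_inv (x : ℝ) (hx : 0 < x) :
    ps (fun k => 1 / ((k:ℝ) + 1)) x = (Real.exp x - 1) / x := by
  have hs1 : Summable (fun k : ℕ => (1:ℝ) * x ^ k / (Nat.factorial k : ℝ)) :=
    summable_ps gc_one x
  have key : x * ps (fun k => 1 / ((k:ℝ) + 1)) x = Real.exp x - 1 := by
    rw [ps, ← tsum_mul_left]
    have h2 : ∀ k : ℕ, x * (1 / ((k:ℝ) + 1) * x ^ k / (Nat.factorial k : ℝ))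
        = (1:ℝ) * x ^ (k+1) / (Nat.factorial (k+1) : ℝ) := by
      intro k
      have hfac : ((Nat.factorial k : ℝ)) ≠ 0 := by exact_mod_cast k.factorial_pos.ne'
      rw [Nat.factorial_succ]
      push_cast
      field_simp
      ring
    rw [tsum_congr h2]
    have := tsum_eq_zero_add' (f := fun k : ℕ => (1:ℝ) * x ^ k / (Nat.factorial k : ℝ))
      ((summable_nat_add_iff 1).2 hs1)
    rw [← ps, ps_one] at this
    simp only [pow_zero, Nat.factorial_zero] at this
    norm_num at this
    simp only [one_mul]
    linarith [this]
  field_simp at key ⊢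
  linarith [key]


noncomputable def Gfun (l : ℝ) : ℝ := l - l * Real.log l + Real.exp (-l) * ps cT l
noncomputable def G1 (l : ℝ) : ℝ := -Real.log l + Real.exp (-l) * ps cS l

lemma ps_shift_T (x : ℝ) : ps cT' x - ps cT x = ps cS x := by
  rw [ps, ps, ps, ← Summable.tsum_sub (summable_ps gc_cT' x) (summable_ps gc_cT x)]
  refine tsum_congr (fun k => ?_)
  have hc : cT' k - cT k = cS k := by
    rw [cT', cT, cT, cS, Nat.factorial_succ]
    push_cast
    rw [Real.log_mul (by positivity) (by exact_mod_cast k.factorial_pos.ne')]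
    ring
  rw [div_sub_div_same, ← sub_mul, hc]

lemma hasDerivAt_G {l : ℝ} (hl : 0 < l) : HasDerivAt Gfun (G1 l) l := by
  have h1 : HasDerivAt (fun y : ℝ => y - y * Real.log y)
      (1 - (1 * Real.log l + l * l⁻¹)) l :=
    (hasDerivAt_id l).sub ((hasDerivAt_id l).mul (Real.hasDerivAt_log hl.ne'))
  have h2 : HasDerivAt (fun y : ℝ => Real.exp (-y)) (Real.exp (-l) * (-1)) l :=
    ((hasDerivAt_id l).neg).exp
  have h3 : HasDerivAt (ps cT) (ps cT' l) l := hasDerivAt_ps gc_cT l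
  have h4 := h2.mul h3
  have h5 := h1.add h4
  have heq : 1 - (1 * Real.log l + l * l⁻¹) +
      (Real.exp (-l) * (-1) * ps cT l + Real.exp (-l) * ps cT' l) = G1 l := by
    rw [G1, ← ps_shift_T l]
    field_simp
    ring
  rw [show Gfun = (fun y : ℝ => y - y * Real.log y + Real.exp (-y) * ps cT y) from rfl,
    ← heq]
  exact h5

lemma hasDerivAt_G1 {l : ℝ} (hl : 0 < l) :
    HasDerivAt G1 (-l⁻¹ + Real.exp (-l) * (ps cS' l - ps cS l)) l := by
  have h1 : HasDerivAt (fun y : ℝ => -Real.log y) (-l⁻¹) l :=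
    (Real.hasDerivAt_log hl.ne').neg
  have h2 : HasDerivAt (fun y : ℝ => Real.exp (-y)) (Real.exp (-l) * (-1)) l :=
    ((hasDerivAt_id l).neg).exp
  have h3 : HasDerivAt (ps cS) (ps cS' l) l := hasDerivAt_ps gc_cS l
  have h4 := h2.mul h3
  have h5 := h1.add h4
  rw [show G1 = (fun y : ℝ => -Real.log y + Real.exp (-y) * ps cS y) from rfl,
    show -l⁻¹ + Real.exp (-l) * (ps cS' l - ps cS l)
      = -l⁻¹ + (Real.exp (-l) * (-1) * ps cS l + Real.exp (-l) * ps cS' l) from by ring]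
  exact h5

lemma G2_neg {l : ℝ} (hl : 0 < l) :
    -l⁻¹ + Real.exp (-l) * (ps cS' l - ps cS l) < 0 := by
  have hA : ps cS' l - ps cS l ≤ (Real.exp l - 1) / l := by
    rw [← ps_inv l hl, ps, ps, ps,
      ← Summable.tsum_sub (summable_ps gc_cS' l) (summable_ps gc_cS l)]
    refine Summable.tsum_le_tsum (fun k => ?_)
      ((summable_ps gc_cS' l).sub (summable_ps gc_cS l)) (summable_ps gc_inv l)
    rw [div_sub_div_same, ← sub_mul]
    have hlog : cS' k - cS k ≤ 1 / ((k:ℝ) + 1) := by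
      rw [cS', cS, cS]
      push_cast
      have h1 : (0:ℝ) < (k:ℝ) + 1 := by positivity
      have h2 : (0:ℝ) < ((k:ℝ) + 1 + 1) / ((k:ℝ) + 1) := by positivity
      have := Real.log_le_sub_one_of_pos h2
      rw [Real.log_div (by linarith) h1.ne'] at this
      have h3 : ((k:ℝ) + 1 + 1) / ((k:ℝ) + 1) - 1 = 1 / ((k:ℝ) + 1) := by
        field_simp
        ring
      linarith [this, h3.symm.le]
    have hpk : (0:ℝ) ≤ l ^ k / (Nat.factorial k : ℝ) := by positivity
    calc (cS' k - cS k) * l ^ k / (Nat.factorial k : ℝ)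
        = (cS' k - cS k) * (l ^ k / (Nat.factorial k : ℝ)) := by ring
      _ ≤ (1 / ((k:ℝ) + 1)) * (l ^ k / (Nat.factorial k : ℝ)) :=
          mul_le_mul_of_nonneg_right hlog hpk
      _ = 1 / ((k:ℝ) + 1) * l ^ k / (Nat.factorial k : ℝ) := by ring
  have he : Real.exp (-l) * Real.exp l = 1 := by
    rw [← Real.exp_add]; simp
  have hepos : 0 < Real.exp (-l) := Real.exp_pos _
  have h6 : Real.exp (-l) * (ps cS' l - ps cS l) ≤ (1 - Real.exp (-l)) / l := by
    calc Real.exp (-l) * (ps cS' l - ps cS l)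
        ≤ Real.exp (-l) * ((Real.exp l - 1) / l) :=
          mul_le_mul_of_nonneg_left hA hepos.le
      _ = (1 - Real.exp (-l)) / l := by
          field_simp
          linear_combination he
  have h7 : (1 - Real.exp (-l)) / l < 1 / l := by
    gcongr
    linarith
  have h8 : (1:ℝ) / l = l⁻¹ := one_div l
  linarith


lemma H_eq {l : ℝ} (hl : 0 < l) :
    -∑' k : ℕ, (l ^ k * Real.exp (-l) / (Nat.factorial k : ℝ)) *
        Real.log (l ^ k * Real.exp (-l) / (Nat.factorial k : ℝ)) = Gfun l := by
  have hterm : ∀ k : ℕ,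
      (l ^ k * Real.exp (-l) / (Nat.factorial k : ℝ)) *
        Real.log (l ^ k * Real.exp (-l) / (Nat.factorial k : ℝ))
      = Real.exp (-l) * (Real.log l * ((k : ℝ) * l ^ k / (Nat.factorial k : ℝ))
          - l * ((1:ℝ) * l ^ k / (Nat.factorial k : ℝ))
          - cT k * l ^ k / (Nat.factorial k : ℝ)) := by
    intro k
    have hfac : (0:ℝ) < (Nat.factorial k : ℝ) := by exact_mod_cast k.factorial_pos
    have hlog : Real.log (l ^ k * Real.exp (-l) / (Nat.factorial k : ℝ))
        = (k : ℝ) * Real.log l + (-l) - Real.log (Nat.factorial k) := by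
      rw [Real.log_div (by positivity) hfac.ne',
        Real.log_mul (by positivity) (Real.exp_ne_zero _), Real.log_pow, Real.log_exp]
    rw [hlog, cT]
    ring
  rw [tsum_congr hterm]
  have hs1 : Summable (fun k : ℕ =>
      Real.log l * ((k : ℝ) * l ^ k / (Nat.factorial k : ℝ))) :=
    (summable_ps gc_nat l).mul_left _
  have hs2 : Summable (fun k : ℕ => l * ((1:ℝ) * l ^ k / (Nat.factorial k : ℝ))) :=
    (summable_ps gc_one l).mul_left _
  have hs3 : Summable (fun k : ℕ => cT k * l ^ k / (Nat.factorial k : ℝ)) :=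
    summable_ps gc_cT l
  rw [tsum_mul_left, Summable.tsum_sub (hs1.sub hs2) hs3, Summable.tsum_sub hs1 hs2,
    tsum_mul_left, tsum_mul_left]
  have e1 : (∑' k : ℕ, (k : ℝ) * l ^ k / (Nat.factorial k : ℝ)) = l * Real.exp l :=
    ps_nat l
  have e2 : (∑' k : ℕ, (1:ℝ) * l ^ k / (Nat.factorial k : ℝ)) = Real.exp l :=
    ps_one l
  rw [e1, e2, Gfun]
  have he : Real.exp (-l) * Real.exp l = 1 := by rw [← Real.exp_add]; simp
  rw [show (∑' k : ℕ, cT k * l ^ k / (Nat.factorial k : ℝ)) = ps cT l from rfl]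
  linear_combination (l - l * Real.log l) * he

lemma strictConcaveOn_congr {s : Set ℝ} {f g : ℝ → ℝ} (hfg : ∀ x ∈ s, f x = g x)
    (hg : StrictConcaveOn ℝ s g) : StrictConcaveOn ℝ s f := by
  refine ⟨hg.1, fun x hx y hy hxy a b ha hb hab => ?_⟩
  rw [hfg x hx, hfg y hy, hfg _ (hg.1 hx hy ha.le hb.le hab)]
  exact hg.2 hx hy hxy ha hb hab

lemma strictConcaveOn_G : StrictConcaveOn ℝ (Set.Ioi (0:ℝ)) Gfun := by
  apply strictConcaveOn_of_deriv2_neg (convex_Ioi 0)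
  · intro x hx
    exact (hasDerivAt_G hx).continuousAt.continuousWithinAt
  · intro x hx
    rw [interior_Ioi] at hx
    have hd1 : deriv Gfun =ᶠ[nhds x] G1 := by
      filter_upwards [isOpen_Ioi.mem_nhds hx] with y hy
      exact (hasDerivAt_G hy).deriv
    have h2 : deriv (deriv Gfun) x = deriv G1 x := hd1.deriv_eq
    show deriv (deriv Gfun) x < 0
    rw [h2, (hasDerivAt_G1 hx).deriv]
    exact G2_neg hx

end ShannonPoissonAux

/-- The Shannon entropy of the Poisson distribution,
`H_S(λ) = -∑_{k=0}^∞ (λ^k e^{-λ}/k!) · log(λ^k e^{-λ}/k!)`,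
is strictly concave in the intensity `λ` on `(0, ∞)`. -/
theorem shannon_entropy_poisson_strictConcaveOn :
    StrictConcaveOn ℝ (Set.Ioi (0 : ℝ)) (fun l : ℝ =>
      -∑' k : ℕ, (l ^ k * Real.exp (-l) / (Nat.factorial k : ℝ)) *
        Real.log (l ^ k * Real.exp (-l) / (Nat.factorial k : ℝ))) := by
  exact ShannonPoissonAux.strictConcaveOn_congr
    (fun x hx => ShannonPoissonAux.H_eq hx) ShannonPoissonAux.strictConcaveOn_G
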